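/- (Necessity part of the main Theorem.) Let m, n₀, n₁ be positive integers with m ≥ 4, gcd(n₀, n₁) = 1 and gcd(n₁, m) = 1. If equation (2) has an integer polynomial solution x, y, z, then there exist positive integers l, k, s, r satisfying (i) n₁ = l·(m·k − 1), (ii) s·n₁ = k·l + r·n₀, and (iii) r divides s·k·l, and moreover, after a suitable permutation of x, y, z, the solution has the form x(λ) = k·(n₀ + n₁·λ), z(λ) = (k·l/r)·(s + r·λ), y(λ) = (n₀ + n₁·λ)·(s + r·λ). -/

import Mathlib

open Polynomial Filter

/-- `x, y, z ∈ ℤ[λ]` form an integer polynomial solution of equation (2). -/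
def IsIntPolySolution (m n₀ n₁ : ℤ) (x y z : Polynomial ℤ) : Prop :=
  (∀ t : ℕ, 0 < x.eval (t : ℤ)) ∧ (∀ t : ℕ, 0 < y.eval (t : ℤ)) ∧
  (∀ t : ℕ, 0 < z.eval (t : ℤ)) ∧
  C m * (x * y * z) = (C n₀ + C n₁ * X) * (x * y + x * z + y * z)

private lemma pos_fac {a b : ℤ} (h : 0 < a * b) (ha : 0 < a) : 0 < b := by
  by_contra hb; push_neg at hb; nlinarith

private lemma ne_zero_of_posEval {p : ℤ[X]} (hp : ∀ t : ℕ, 0 < p.eval (t : ℤ)) : p ≠ 0 := by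
  intro h; simpa [h] using hp 0

private lemma leadingCoeff_pos_of_posEval {p : ℤ[X]} (hp : ∀ t : ℕ, 0 < p.eval (t : ℤ)) :
    0 < p.leadingCoeff := by
  rcases Nat.eq_zero_or_pos p.natDegree with h0 | hdeg
  · have h1 := hp 0
    have h2 := p.eq_C_of_natDegree_eq_zero h0
    rw [h2] at h1
    rw [h2, leadingCoeff_C]
    simpa using h1
  · by_contra hle
    push_neg at hle
    have hinj : Function.Injective (Int.castRingHom ℝ) := fun a b h => by
      simpa using (Int.cast_injective (α := ℝ) (by simpa using h))
    set P : ℝ[X] := p.map (Int.castRingHom ℝ) with hP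
    have hdegP : P.natDegree = p.natDegree := natDegree_map_eq_of_injective hinj p
    have hdegP' : 0 < P.degree := by
      rw [← natDegree_pos_iff_degree_pos, hdegP]; exact hdeg
    have hleadP : P.leadingCoeff ≤ 0 := by
      rw [leadingCoeff_map_of_injective hinj]
      show ((p.leadingCoeff : ℤ) : ℝ) ≤ 0
      exact_mod_cast hle
    have htd := P.tendsto_atBot_of_leadingCoeff_nonpos hdegP' hleadP
    have htd2 : Tendsto (fun t : ℕ => P.eval (t : ℝ)) atTop atBot :=
      htd.comp tendsto_natCast_atTop_atTop
    obtain ⟨t, ht⟩ := (htd2.eventually_lt_atBot 0).exists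
    have heq : P.eval (t : ℝ) = ((p.eval (t : ℤ) : ℤ) : ℝ) := by
      rw [hP, eval_map, eval₂_at_natCast]
      norm_num
    rw [heq] at ht
    have h3 := hp t
    have : (0:ℝ) < ((p.eval (t : ℤ) : ℤ) : ℝ) := by exact_mod_cast h3
    linarith

private lemma lead_add_pos {p q : ℤ[X]} (hp : 0 < p.leadingCoeff) (hq : 0 < q.leadingCoeff) :
    0 < (p + q).leadingCoeff ∧ (p + q).natDegree = max p.natDegree q.natDegree := by
  have hp0 : p ≠ 0 := fun h => by simp [h] at hp
  have hq0 : q ≠ 0 := fun h => by simp [h] at hq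
  rcases lt_trichotomy p.natDegree q.natDegree with h | h | h
  · have hd : p.degree < q.degree := degree_lt_degree h
    refine ⟨by rwa [leadingCoeff_add_of_degree_lt hd], ?_⟩
    rw [natDegree_add_eq_right_of_natDegree_lt h]; omega
  · have hcoeff : (p + q).coeff p.natDegree = p.leadingCoeff + q.leadingCoeff := by
      rw [coeff_add, leadingCoeff, leadingCoeff, h]
    have hpos : 0 < (p + q).coeff p.natDegree := by rw [hcoeff]; positivity
    have hne : (p + q).coeff p.natDegree ≠ 0 := ne_of_gt hpos
    have hle : (p + q).natDegree ≤ p.natDegree := by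
      refine le_trans (natDegree_add_le p q) (by omega)
    have hge : p.natDegree ≤ (p + q).natDegree := le_natDegree_of_ne_zero hne
    have hdeq : (p + q).natDegree = p.natDegree := le_antisymm hle hge
    constructor
    · rw [leadingCoeff, hdeq]; exact hpos
    · omega
  · have hd : q.degree < p.degree := degree_lt_degree h
    refine ⟨by rwa [add_comm, leadingCoeff_add_of_degree_lt hd], ?_⟩
    rw [add_comm, natDegree_add_eq_right_of_natDegree_lt h]; omega

private lemma n_coeff0 (n₀ n₁ : ℤ) : (C n₀ + C n₁ * X : ℤ[X]).coeff 0 = n₀ := by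
  rw [coeff_add, coeff_C, coeff_C_mul, coeff_X_zero]; simp

private lemma n_coeff1 (n₀ n₁ : ℤ) : (C n₀ + C n₁ * X : ℤ[X]).coeff 1 = n₁ := by
  rw [coeff_add, coeff_C, coeff_C_mul, coeff_X_one]; simp

private lemma n_natDegree {n₀ n₁ : ℤ} (hn₁ : 0 < n₁) :
    (C n₀ + C n₁ * X : ℤ[X]).natDegree = 1 := by
  rw [add_comm]; exact natDegree_linear (ne_of_gt hn₁)

private lemma n_lead {n₀ n₁ : ℤ} (hn₁ : 0 < n₁) :
    (C n₀ + C n₁ * X : ℤ[X]).leadingCoeff = n₁ := by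
  rw [leadingCoeff, n_natDegree hn₁]
  exact n_coeff1 n₀ n₁

private lemma n_posEval {n₀ n₁ : ℤ} (hn₀ : 0 < n₀) (hn₁ : 0 < n₁) (t : ℕ) :
    0 < (C n₀ + C n₁ * X : ℤ[X]).eval (t : ℤ) := by
  simp only [eval_add, eval_mul, eval_C, eval_X]
  positivity

private lemma n_ne_zero {n₀ n₁ : ℤ} (hn₀ : 0 < n₀) (hn₁ : 0 < n₁) :
    (C n₀ + C n₁ * X : ℤ[X]) ≠ 0 :=
  fun h => by have := n_posEval hn₀ hn₁ 0; rw [h] at this; simp at this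

private lemma nprime {n₀ n₁ : ℤ} (hn₁ : 0 < n₁) (hcop : Int.gcd n₀ n₁ = 1) :
    Prime (C n₀ + C n₁ * X : ℤ[X]) := by
  have hn1ne : n₁ ≠ 0 := ne_of_gt hn₁
  have hprim : (C n₀ + C n₁ * X : ℤ[X]).IsPrimitive := by
    intro r hr
    obtain ⟨q, hq⟩ := hr
    have h0 : r ∣ n₀ := ⟨q.coeff 0, by
      have h := congrArg (fun p => Polynomial.coeff p 0) hq
      simp only [coeff_C_mul] at h
      rw [← n_coeff0 n₀ n₁]; exact h⟩
    have h1 : r ∣ n₁ := ⟨q.coeff 1, by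
      have h := congrArg (fun p => Polynomial.coeff p 1) hq
      simp only [coeff_C_mul] at h
      rw [← n_coeff1 n₀ n₁]; exact h⟩
    have : r ∣ (1 : ℤ) := by
      have := Int.dvd_coe_gcd h0 h1
      rwa [hcop] at this
    exact isUnit_of_dvd_one this
  have hirr : Irreducible (C n₀ + C n₁ * X : ℤ[X]) := by
    rw [Polynomial.IsPrimitive.Int.irreducible_iff_irreducible_map_cast hprim]
    apply irreducible_of_degree_eq_one
    rw [Polynomial.map_add, Polynomial.map_mul, map_C, map_C, map_X]
    rw [add_comm]
    exact degree_linear (by simpa using (Int.cast_ne_zero (α := ℚ)).mpr hn1ne)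
  exact hirr.prime

private lemma mswap23 {α : Type*} (a b c : α) : ({a, b, c} : Multiset α) = {a, c, b} :=
  congrArg (a ::ₘ ·) (Multiset.cons_swap b c 0)

private lemma mswap12 {α : Type*} (a b c : α) : ({a, b, c} : Multiset α) = {b, a, c} :=
  Multiset.cons_swap a b {c}

private lemma m_dvd_absurd {m n₁ : ℤ} (hm : 4 ≤ m) (hcop' : Int.gcd n₁ m = 1)
    (h : m ∣ n₁) : False := by
  have h2 : m ∣ (Int.gcd n₁ m : ℤ) := Int.dvd_coe_gcd h dvd_rfl
  rw [hcop'] at h2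
  have := Int.le_of_dvd one_pos h2
  omega

private lemma quad_eq {a2 a1 a0 b2 b1 b0 : ℤ}
    (h : C a2 * X^2 + C a1 * X + C a0 = (C b2 * X^2 + C b1 * X + C b0 : ℤ[X])) :
    a2 = b2 ∧ a1 = b1 ∧ a0 = b0 := by
  refine ⟨?_, ?_, ?_⟩
  · have h2 := congrArg (fun p => Polynomial.coeff p 2) h
    simp only [coeff_add, coeff_C_mul, coeff_X_pow, coeff_C, coeff_X] at h2
    norm_num at h2
    exact h2
  · have h1 := congrArg (fun p => Polynomial.coeff p 1) h
    simp only [coeff_add, coeff_C_mul, coeff_X_pow, coeff_C, coeff_X] at h1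
    norm_num at h1
    exact h1
  · have h0 := congrArg (fun p => Polynomial.coeff p 0) h
    simp only [coeff_add, coeff_C_mul, coeff_X_pow, coeff_C, coeff_X] at h0
    norm_num at h0
    exact h0

private lemma z_nonconst {m n₀ n₁ : ℤ} (hm : 4 ≤ m) (hn₀ : 0 < n₀) (hn₁ : 0 < n₁)
    {x y z : ℤ[X]}
    (hxpos : ∀ t : ℕ, 0 < x.eval (t:ℤ)) (hypos : ∀ t : ℕ, 0 < y.eval (t:ℤ))
    (hzpos : ∀ t : ℕ, 0 < z.eval (t:ℤ))
    (heq : C m * (x*y*z) = (C n₀ + C n₁ * X) * (x*y + x*z + y*z)) :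
    1 ≤ z.natDegree := by
  by_contra h
  push_neg at h
  have h0 : z.natDegree = 0 := by omega
  have hzC : z = C (z.coeff 0) := z.eq_C_of_natDegree_eq_zero h0
  set d := z.coeff 0 with hd
  have hdpos : 0 < d := by have := hzpos 0; rw [hzC] at this; simpa using this
  set t : ℕ := (m*d).toNat with ht
  have htval : (t : ℤ) = m*d := Int.toNat_of_nonneg (by positivity)
  have hX := hxpos t
  have hY := hypos t
  rw [hzC] at heq
  have hev := congrArg (fun p => Polynomial.eval (t:ℤ) p) heq
  simp only [eval_mul, eval_add, eval_C, eval_X] at hev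
  set A := x.eval (t:ℤ)
  set B := y.eval (t:ℤ)
  have hN : (1:ℤ) + m*d ≤ n₀ + n₁ * t := by
    rw [htval]; nlinarith
  have hNpos : (0:ℤ) < n₀ + n₁ * t := by nlinarith
  nlinarith [mul_le_mul_of_nonneg_right hN (le_of_lt (mul_pos hX hY)),
    mul_pos (mul_pos hNpos hX) hdpos, mul_pos (mul_pos hNpos hY) hdpos]

private lemma good' (m n₀ n₁ : ℤ) (hm : 4 ≤ m) (hn₀ : 0 < n₀) (hn₁ : 0 < n₁)
    (hcop : Int.gcd n₀ n₁ = 1) (hcop' : Int.gcd n₁ m = 1)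
    (x y z y₁ : ℤ[X]) (k : ℤ)
    (hxpos : ∀ t : ℕ, 0 < x.eval (t:ℤ)) (hypos : ∀ t : ℕ, 0 < y.eval (t:ℤ))
    (hzpos : ∀ t : ℕ, 0 < z.eval (t:ℤ))
    (heq : C m * (x*y*z) = (C n₀ + C n₁ * X) * (x*y + x*z + y*z))
    (hx : x = (C n₀ + C n₁ * X) * C k) (hy : y = (C n₀ + C n₁ * X) * y₁) :
    ∃ l k' s r : ℤ, 0 < l ∧ 0 < k' ∧ 0 < s ∧ 0 < r ∧
      n₁ = l * (m * k' - 1) ∧ s * n₁ = k' * l + r * n₀ ∧ r ∣ s * k' * l ∧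
      ({x, y, z} : Multiset (Polynomial ℤ)) =
        {C k' * (C n₀ + C n₁ * X), C (k' * l * s / r) + C (k' * l) * X,
         (C n₀ + C n₁ * X) * (C s + C r * X)} := by
  have hnne : (C n₀ + C n₁ * X : ℤ[X]) ≠ 0 := fun h => by
    have := n_posEval hn₀ hn₁ 0; rw [h] at this; simp at this
  have hkpos : 0 < k := by
    have h1 := hxpos 0
    rw [hx] at h1
    simp only [eval_mul, eval_add, eval_C, eval_X, Nat.cast_zero, mul_zero, add_zero] at h1
    exact pos_fac h1 hn₀
  have hkne : k ≠ 0 := ne_of_gt hkpos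
  have hy₁pos : ∀ t : ℕ, 0 < y₁.eval (t:ℤ) := fun t => by
    have h1 := hypos t
    rw [hy, eval_mul] at h1
    exact pos_fac h1 (n_posEval hn₀ hn₁ t)
  have hzdeg1 : 1 ≤ z.natDegree := z_nonconst hm hn₀ hn₁ hxpos hypos hzpos heq
  have hzne : z ≠ 0 := fun h => by have := hzpos 0; rw [h] at this; simp at this
  have hy₁ne : y₁ ≠ 0 := fun h => by have := hy₁pos 0; rw [h] at this; simp at this
  rw [hx, hy] at heq
  have hE2 : C m * (C k * (y₁ * z)) =
      (C n₀ + C n₁ * X) * (C k * y₁) + C k * z + y₁ * z := by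
    apply mul_left_cancel₀ (mul_ne_zero hnne hnne)
    linear_combination heq
  -- y₁ cannot be constant
  have hbpos : 1 ≤ y₁.natDegree := by
    by_contra hb
    push_neg at hb
    have hb0 : y₁.natDegree = 0 := by omega
    have hy₁C := y₁.eq_C_of_natDegree_eq_zero hb0
    have hk'pos : 0 < y₁.coeff 0 := by
      have := hy₁pos 0; rw [hy₁C] at this; simpa using this
    set k' := y₁.coeff 0
    have hZ : C (m*k*k' - k - k') * z = C (k*k') * (C n₀ + C n₁ * X) := by
      rw [show (C (m*k*k' - k - k') : ℤ[X]) = C m * C k * C k' - C k - C k' by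
            rw [C_sub, C_sub, C_mul, C_mul],
          show (C (k*k') : ℤ[X]) = C k * C k' by rw [C_mul]]
      rw [hy₁C] at hE2
      linear_combination hE2
    have hzc1 : (m*k*k' - k - k') * z.coeff 1 = (k*k') * n₁ := by
      have h := congrArg (fun p => Polynomial.coeff p 1) hZ
      simpa only [coeff_C_mul, n_coeff1] using h
    have hzc0 : (m*k*k' - k - k') * z.coeff 0 = (k*k') * n₀ := by
      have h := congrArg (fun p => Polynomial.coeff p 0) hZ
      simpa only [coeff_C_mul, n_coeff0] using h
    obtain ⟨a, b, hab⟩ := Int.isCoprime_iff_gcd_eq_one.mpr hcop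
    have hdvd : (m*k*k' - k - k') ∣ (k*k') := by
      have h2 : k*k' = b*((k*k')*n₁) + a*((k*k')*n₀) := by linear_combination (-(k*k'))*hab
      rw [h2]
      exact dvd_add (Dvd.dvd.mul_left ⟨z.coeff 1, hzc1.symm⟩ b)
        (Dvd.dvd.mul_left ⟨z.coeff 0, hzc0.symm⟩ a)
    have hkk'pos : 0 < k*k' := mul_pos hkpos hk'pos
    have := Int.le_of_dvd hkk'pos hdvd
    nlinarith
  -- main case
  have hW : y₁ * (C (m*k-1) * z - C k * (C n₀ + C n₁ * X)) = C k * z := by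
    rw [show (C (m*k-1) : ℤ[X]) = C m * C k - 1 by rw [C_sub, C_mul, C_1]]
    linear_combination hE2
  have hCkz : C k * z ≠ 0 := mul_ne_zero (by simpa using hkne) hzne
  have hWne : (C (m*k-1) * z - C k * (C n₀ + C n₁ * X) : ℤ[X]) ≠ 0 := fun h => by
    rw [h, mul_zero] at hW; exact hCkz hW.symm
  have hdegs : y₁.natDegree + (C (m*k-1) * z - C k * (C n₀ + C n₁ * X)).natDegree
      = z.natDegree := by
    have h1 := natDegree_mul hy₁ne hWne
    rw [hW, natDegree_mul (by simpa using hkne) hzne, natDegree_C] at h1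
    omega
  have hlz : 0 < z.leadingCoeff := leadingCoeff_pos_of_posEval hzpos
  have hmk1 : 0 < m*k - 1 := by nlinarith
  have hzdeg : z.natDegree = 1 := by
    by_contra hdz2
    have hdz2' : 2 ≤ z.natDegree := by omega
    have hWcoeff : (C (m*k-1) * z - C k * (C n₀ + C n₁ * X)).coeff z.natDegree
        = (m*k-1) * z.leadingCoeff := by
      rw [coeff_sub, coeff_C_mul, coeff_C_mul,
        coeff_eq_zero_of_natDegree_lt (p := C n₀ + C n₁ * X)
          (by rw [n_natDegree hn₁]; omega), leadingCoeff]
      ring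
    have hne : (C (m*k-1) * z - C k * (C n₀ + C n₁ * X)).coeff z.natDegree ≠ 0 := by
      rw [hWcoeff]; positivity
    have := le_natDegree_of_ne_zero hne
    omega
  have hWdeg0 : (C (m*k-1) * z - C k * (C n₀ + C n₁ * X)).natDegree = 0 := by omega
  have hb1 : y₁.natDegree = 1 := by omega
  have hWC : (C (m*k-1) * z - C k * (C n₀ + C n₁ * X) : ℤ[X])
      = C ((m*k-1) * z.coeff 0 - k * n₀) := by
    have h := (C (m*k-1) * z - C k * (C n₀ + C n₁ * X)).eq_C_of_natDegree_eq_zero hWdeg0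
    rw [coeff_sub, coeff_C_mul, coeff_C_mul, n_coeff0] at h
    exact h
  have hWc1 : (m*k-1) * z.coeff 1 - k * n₁ = 0 := by
    have h := congrArg (fun p => Polynomial.coeff p 1) hWC
    simp only [coeff_sub, coeff_C_mul, n_coeff1, coeff_C] at h
    simpa using h
  have hz₁pos : 0 < z.coeff 1 := by
    have h : z.coeff 1 = z.leadingCoeff := by rw [leadingCoeff, hzdeg]
    rw [h]; exact hlz
  have hz₀pos : 0 < z.coeff 0 := by
    have h := hzpos 0
    rw [coeff_zero_eq_eval_zero]
    simpa using h
  have hrpos : 0 < y₁.coeff 1 := by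
    have h1 : y₁.coeff 1 = y₁.leadingCoeff := by rw [leadingCoeff, hb1]
    rw [h1]; exact leadingCoeff_pos_of_posEval hy₁pos
  have hspos : 0 < y₁.coeff 0 := by
    have h := hy₁pos 0
    rw [coeff_zero_eq_eval_zero]
    simpa using h
  rw [hWC] at hW
  set s := y₁.coeff 0
  set r := y₁.coeff 1
  set z₀ := z.coeff 0
  set z₁ := z.coeff 1
  set w := (m*k-1) * z₀ - k * n₀ with hw0
  have hs : s * w = k * z₀ := by
    have h := congrArg (fun p => Polynomial.coeff p 0) hW
    simpa only [coeff_mul_C, coeff_C_mul] using h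
  have hr : r * w = k * z₁ := by
    have h := congrArg (fun p => Polynomial.coeff p 1) hW
    simpa only [coeff_mul_C, coeff_C_mul] using h
  have hwpos : 0 < w :=
    pos_fac (show (0:ℤ) < r*w by rw [hr]; positivity) hrpos
  have cop2 : IsCoprime (m*k-1) k := ⟨-1, m, by ring⟩
  have hdvdl : (m*k-1) ∣ n₁ := cop2.dvd_of_dvd_mul_left ⟨z₁, by linarith⟩
  obtain ⟨l, hl⟩ := hdvdl
  have hlpos : 0 < l := pos_fac (a := m*k-1) (by rw [← hl]; exact hn₁) hmk1
  have hz₁kl : z₁ = k * l := by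
    apply mul_left_cancel₀ (ne_of_gt hmk1)
    linear_combination hWc1 + k * hl
  have hii : s * n₁ = k * l + r * n₀ := by
    apply mul_right_cancel₀ (ne_of_gt hwpos)
    linear_combination n₁*hs - n₀*hr - n₀*k*hz₁kl + k*z₀*hl - k*l*hw0
  have hskl : s * k * l = r * z₀ := by
    apply mul_left_cancel₀ hkne
    linear_combination r*hs - s*hr - k*s*hz₁kl
  have hdiv : k * l * s / r = z₀ := by
    rw [show k*l*s = r*z₀ by linarith [hskl]]
    exact Int.mul_ediv_cancel_left _ (ne_of_gt hrpos)
  refine ⟨l, k, s, r, hlpos, hkpos, hspos, hrpos, by linarith [hl], hii,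
    ⟨z₀, by linarith [hskl]⟩, ?_⟩
  have hxf : x = C k * (C n₀ + C n₁ * X) := by rw [hx]; ring
  have hyf : y = (C n₀ + C n₁ * X) * (C s + C r * X) := by
    rw [hy]
    conv_lhs => rw [eq_X_add_C_of_natDegree_le_one (p := y₁) (by omega)]
    ring
  have hzf : z = C (k*l*s/r) + C (k*l) * X := by
    rw [hdiv, ← hz₁kl]
    conv_lhs => rw [eq_X_add_C_of_natDegree_le_one (p := z) (by omega)]
    ring
  rw [hxf, hyf, hzf]
  exact mswap23 _ _ _

private lemma nobad2 {m n₀ n₁ : ℤ} (hm : 4 ≤ m) (hn₁ : 0 < n₁) (hcop' : Int.gcd n₁ m = 1)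
    (x₁ u y z : ℤ[X])
    (hlu : 0 < u.leadingCoeff) (hly : 0 < y.leadingCoeff) (hlz : 0 < z.leadingCoeff)
    (hml : m * x₁.leadingCoeff = n₁ * u.leadingCoeff)
    (huyz : u * (y*z) = x₁ * (y+z))
    (hdz : z.natDegree < y.natDegree) : False := by
  have hlead := congrArg leadingCoeff huyz
  have hyzlead : (y + z).leadingCoeff = y.leadingCoeff := by
    rw [add_comm]
    exact leadingCoeff_add_of_degree_lt (degree_lt_degree hdz)
  rw [leadingCoeff_mul, leadingCoeff_mul, leadingCoeff_mul, hyzlead] at hlead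
  have hcancel : u.leadingCoeff * z.leadingCoeff = x₁.leadingCoeff :=
    mul_right_cancel₀ (ne_of_gt hly) (by linear_combination hlead)
  have hmn : m * z.leadingCoeff = n₁ :=
    mul_right_cancel₀ (ne_of_gt hlu) (by linear_combination m * hcancel + hml)
  exact m_dvd_absurd hm hcop' ⟨z.leadingCoeff, hmn.symm⟩

private lemma nobad (m n₀ n₁ : ℤ) (hm : 4 ≤ m) (hn₀ : 0 < n₀) (hn₁ : 0 < n₁)
    (hcop : Int.gcd n₀ n₁ = 1) (hcop' : Int.gcd n₁ m = 1)
    (x y z x₁ : ℤ[X])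
    (hxpos : ∀ t : ℕ, 0 < x.eval (t:ℤ)) (hypos : ∀ t : ℕ, 0 < y.eval (t:ℤ))
    (hzpos : ∀ t : ℕ, 0 < z.eval (t:ℤ))
    (heq : C m * (x*y*z) = (C n₀ + C n₁ * X) * (x*y + x*z + y*z))
    (hx : x = (C n₀ + C n₁ * X) * x₁)
    (hdvd : (C n₀ + C n₁ * X : ℤ[X]) ∣ C m * x₁ - 1) : False := by
  obtain ⟨u, hu⟩ := hdvd
  have hnne : (C n₀ + C n₁ * X : ℤ[X]) ≠ 0 := fun h => by
    have := n_posEval hn₀ hn₁ 0; rw [h] at this; simp at this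
  have hx₁pos : ∀ t : ℕ, 0 < x₁.eval (t:ℤ) := fun t => by
    have h1 := hxpos t
    rw [hx, eval_mul] at h1
    exact pos_fac h1 (n_posEval hn₀ hn₁ t)
  have hupos : ∀ t : ℕ, 0 < u.eval (t:ℤ) := fun t => by
    have h1 := congrArg (fun p => Polynomial.eval (t:ℤ) p) hu
    simp only [eval_sub, eval_mul, eval_one, eval_C] at h1
    have h2 : 1 ≤ x₁.eval (t:ℤ) := hx₁pos t
    have h3 : 0 < (C n₀ + C n₁ * X : ℤ[X]).eval (t:ℤ) * u.eval (t:ℤ) := by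
      rw [← h1]; nlinarith
    exact pos_fac h3 (n_posEval hn₀ hn₁ t)
  have hune : u ≠ 0 := fun h => by have := hupos 0; rw [h] at this; simp at this
  have hx₁ne : x₁ ≠ 0 := fun h => by have := hx₁pos 0; rw [h] at this; simp at this
  have hyne : y ≠ 0 := fun h => by have := hypos 0; rw [h] at this; simp at this
  have hzne : z ≠ 0 := fun h => by have := hzpos 0; rw [h] at this; simp at this
  have heq0 := heq
  rw [hx] at heq
  have hE : C m * (x₁*(y*z)) = (C n₀ + C n₁ * X)*(x₁*(y+z)) + y*z :=
    mul_left_cancel₀ hnne (by linear_combination heq)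
  have huyz : u * (y*z) = x₁*(y+z) :=
    mul_left_cancel₀ hnne (by linear_combination hE - (y*z) * hu)
  -- x₁ is nonconstant
  have he1 : 1 ≤ x₁.natDegree := by
    by_contra h
    push_neg at h
    have h0 : x₁.natDegree = 0 := by omega
    have hL : (C m * x₁ - 1 : ℤ[X]) = C (m * x₁.coeff 0 - 1) := by
      conv_lhs => rw [x₁.eq_C_of_natDegree_eq_zero h0]
      rw [C_sub, C_mul, C_1]
    have hd := congrArg natDegree hu
    rw [hL, natDegree_C, natDegree_mul hnne hune, n_natDegree hn₁] at hd
    omega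
  -- degree of C m * x₁ - 1
  have hCmne : (C m : ℤ[X]) ≠ 0 := fun h => by
    have := C_eq_zero.mp h; omega
  have hlx₁ : 0 < x₁.leadingCoeff := leadingCoeff_pos_of_posEval hx₁pos
  have hLdeg : (C m * x₁ - 1 : ℤ[X]).natDegree = x₁.natDegree := by
    have hle : (C m * x₁ - 1 : ℤ[X]).natDegree ≤ x₁.natDegree := by
      refine le_trans (natDegree_sub_le _ _) ?_
      simp only [natDegree_one, natDegree_mul hCmne hx₁ne, natDegree_C]
      omega
    have hco : (C m * x₁ - 1 : ℤ[X]).coeff x₁.natDegree ≠ 0 := by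
      rw [coeff_sub, coeff_C_mul, coeff_one, if_neg (by omega)]
      have : 0 < m * x₁.leadingCoeff := by positivity
      rw [leadingCoeff] at this
      omega
    exact le_antisymm hle (le_natDegree_of_ne_zero hco)
  have hdu : 1 + u.natDegree = x₁.natDegree := by
    have hd := congrArg natDegree hu
    rw [hLdeg, natDegree_mul hnne hune, n_natDegree hn₁] at hd
    omega
  have hnudeg : ((C n₀ + C n₁ * X) * u : ℤ[X]).natDegree = x₁.natDegree := by
    rw [natDegree_mul hnne hune, n_natDegree hn₁]; omega
  have hml : m * x₁.leadingCoeff = n₁ * u.leadingCoeff := by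
    have h := congrArg (fun p => Polynomial.coeff p x₁.natDegree) hu
    simp only [coeff_sub, coeff_C_mul, coeff_one, if_neg (show ¬ x₁.natDegree = 0 by omega)] at h
    rw [show ((C n₀ + C n₁ * X) * u : ℤ[X]).coeff x₁.natDegree
          = ((C n₀ + C n₁ * X) * u : ℤ[X]).leadingCoeff by rw [leadingCoeff, hnudeg],
        leadingCoeff_mul, n_lead hn₁, leadingCoeff] at h
    simp only [leadingCoeff]
    linarith [h]
  -- case x₁ has degree 1
  rcases Nat.lt_or_ge x₁.natDegree 2 with he2 | he2
  · have he11 : x₁.natDegree = 1 := by omega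
    have hdu0 : u.natDegree = 0 := by omega
    have huC := u.eq_C_of_natDegree_eq_zero hdu0
    have hu₀pos : 0 < u.coeff 0 := by
      have := hupos 0; rw [coeff_zero_eq_eval_zero]; simpa using this
    have hc1 : m * x₁.coeff 1 = n₁ * u.coeff 0 := by
      have h := congrArg (fun p => Polynomial.coeff p 1) hu
      rw [huC] at h
      simp only [coeff_sub, coeff_C_mul, coeff_one, coeff_mul_C, n_coeff1] at h
      norm_num at h
      linarith [h]
    have hc0 : m * x₁.coeff 0 - 1 = n₀ * u.coeff 0 := by
      have h := congrArg (fun p => Polynomial.coeff p 0) hu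
      rw [huC] at h
      simp only [coeff_sub, coeff_C_mul, coeff_one, coeff_mul_C, n_coeff0] at h
      norm_num at h
      linarith [h]
    have copm : IsCoprime (m : ℤ) n₁ := by
      rw [Int.isCoprime_iff_gcd_eq_one, Int.gcd_comm]
      exact hcop'
    have hmdvd : m ∣ u.coeff 0 :=
      copm.dvd_of_dvd_mul_left ⟨x₁.coeff 1, by linarith⟩
    obtain ⟨w, hw⟩ := hmdvd
    have : m ∣ 1 := ⟨x₁.coeff 0 - n₀ * w, by linear_combination -hc0 - n₀ * hw⟩
    have := Int.le_of_dvd one_pos this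
    omega
  -- case x₁ has degree ≥ 2
  have hlu : 0 < u.leadingCoeff := leadingCoeff_pos_of_posEval hupos
  have hly : 0 < y.leadingCoeff := leadingCoeff_pos_of_posEval hypos
  have hlz : 0 < z.leadingCoeff := leadingCoeff_pos_of_posEval hzpos
  have hdy1 : 1 ≤ y.natDegree :=
    z_nonconst hm hn₀ hn₁ hxpos hzpos hypos (by linear_combination heq0)
  have hdz1 : 1 ≤ z.natDegree :=
    z_nonconst hm hn₀ hn₁ hxpos hypos hzpos heq0
  rcases lt_trichotomy y.natDegree z.natDegree with hyz | hyz | hyz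
  · exact nobad2 (n₀ := n₀) hm hn₁ hcop' x₁ u z y hlu hlz hly hml (by linear_combination huyz) hyz
  · -- both have degree d; show d = 1 via degree count, then main argument
    have hsum := lead_add_pos hly hlz
    have hdeg := congrArg natDegree huyz
    rw [natDegree_mul hune (mul_ne_zero hyne hzne), natDegree_mul hyne hzne,
        natDegree_mul hx₁ne (fun h => by rw [h] at hsum; simp at hsum), hsum.2] at hdeg
    have hdy : y.natDegree = 1 := by omega
    have hdz : z.natDegree = 1 := by omega
    -- Q := C m * (y*z) - nn*(y+z) is a positive constant c
    have hxQ : x * (C m * (y*z) - (C n₀ + C n₁ * X)*(y+z)) = (C n₀ + C n₁ * X) * (y*z) := by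
      rw [hx]
      linear_combination heq
    have hQevalpos : 0 < (C m * (y*z) - (C n₀ + C n₁ * X)*(y+z)).eval 0 := by
      have h := congrArg (fun p => Polynomial.eval 0 p) hxQ
      simp only [eval_mul] at h
      have hx0 : 0 < x.eval 0 := by have := hxpos 0; simpa using this
      have hy0 : 0 < y.eval 0 := by have := hypos 0; simpa using this
      have hz0 : 0 < z.eval 0 := by have := hzpos 0; simpa using this
      have hn0 : 0 < (C n₀ + C n₁ * X : ℤ[X]).eval 0 := by have := n_posEval hn₀ hn₁ 0; simpa using this
      refine pos_fac ?_ hx0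
      rw [h]; positivity
    have hQne : (C m * (y*z) - (C n₀ + C n₁ * X)*(y+z) : ℤ[X]) ≠ 0 := fun h => by
      rw [h] at hQevalpos; simp at hQevalpos
    have hxne : x ≠ 0 := fun h => by have := hxpos 0; rw [h] at this; simp at this
    have hdegQ := congrArg natDegree hxQ
    rw [natDegree_mul hxne hQne, natDegree_mul hnne (mul_ne_zero hyne hzne),
        natDegree_mul hyne hzne, n_natDegree hn₁, hx,
        natDegree_mul hnne hx₁ne, n_natDegree hn₁] at hdegQ
    have hQdeg0 : (C m * (y*z) - (C n₀ + C n₁ * X)*(y+z)).natDegree = 0 := by omega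
    have hQC := (C m * (y*z) - (C n₀ + C n₁ * X)*(y+z)).eq_C_of_natDegree_eq_zero hQdeg0
    have hcpos : 0 < (C m * (y*z) - (C n₀ + C n₁ * X)*(y+z)).coeff 0 := by
      rw [coeff_zero_eq_eval_zero]; exact hQevalpos
    set c := (C m * (y*z) - (C n₀ + C n₁ * X)*(y+z)).coeff 0 with hcdef
    -- coefficient identities
    have hyform := eq_X_add_C_of_natDegree_le_one (p := y) (le_of_eq hdy)
    have hzform := eq_X_add_C_of_natDegree_le_one (p := z) (le_of_eq hdz)
    set ly := y.coeff 1
    set y₀ := y.coeff 0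
    set lz := z.coeff 1
    set z₀ := z.coeff 0
    have hkey : C (m*(ly*lz) - (n₁*ly + n₁*lz)) * X^2
        + C (m*(ly*z₀ + lz*y₀) - (n₁*y₀ + n₁*z₀ + n₀*ly + n₀*lz)) * X
        + C (m*(y₀*z₀) - (n₀*y₀ + n₀*z₀))
        = C 0 * X^2 + C 0 * X + C c := by
      have hL : (C m * (y*z) - (C n₀ + C n₁ * X)*(y+z) : ℤ[X])
          = C (m*(ly*lz) - (n₁*ly + n₁*lz)) * X^2
            + C (m*(ly*z₀ + lz*y₀) - (n₁*y₀ + n₁*z₀ + n₀*ly + n₀*lz)) * X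
            + C (m*(y₀*z₀) - (n₀*y₀ + n₀*z₀)) := by
        simp only [C_sub, C_add, C_mul]
        conv_lhs => rw [hyform, hzform]
        ring
      rw [← hL, hQC, C_0]
      ring
    obtain ⟨hc2, hc1, hc0⟩ := quad_eq hkey
    -- positivity of the linear coefficients and constant terms
    have hlypos : 0 < ly := by
      have : ly = y.leadingCoeff := by rw [leadingCoeff, hdy]
      rw [this]; exact hly
    have hlzpos : 0 < lz := by
      have : lz = z.leadingCoeff := by rw [leadingCoeff, hdz]
      rw [this]; exact hlz
    have hy₀pos : 0 < y₀ := by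
      have h := hypos 0
      rw [show y₀ = y.coeff 0 from rfl, coeff_zero_eq_eval_zero]
      simpa using h
    have hz₀pos : 0 < z₀ := by
      have h := hzpos 0
      rw [show z₀ = z.coeff 0 from rfl, coeff_zero_eq_eval_zero]
      simpa using h
    -- the sign contradiction
    set P := y₀*n₁ - ly*n₀ with hP
    set R := z₀*n₁ - lz*n₀ with hR
    set S := z₀*ly - y₀*lz with hS
    have h1 : m*(P*R) = c*n₁^2 := by
      linear_combination (n₀^2) * hc2 - (n₀*n₁) * hc1 + (n₁^2) * hc0
    have h2 : P*S = c*ly^2 := by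
      linear_combination (y₀^2) * hc2 - (ly*y₀) * hc1 + (ly^2) * hc0
    have h3 : R*S = -(c*lz^2) := by
      linear_combination (-(z₀^2)) * hc2 + (lz*z₀) * hc1 - (lz^2) * hc0
    have hPR : 0 < P*R := by
      refine pos_fac (a := m) ?_ (by omega)
      rw [h1]; positivity
    have hSne : S ≠ 0 := by
      intro h
      rw [h, mul_zero] at h2
      have : 0 < c*ly^2 := by positivity
      linarith
    have hS2 : 0 < S^2 := by positivity
    have hkey2 : (P*R)*S^2 = -(c^2*ly^2*lz^2) := by
      linear_combination (R*S)*h2 + (c*ly^2)*h3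
    have hpos2 : 0 < (P*R)*S^2 := mul_pos hPR hS2
    rw [hkey2] at hpos2
    have : 0 < c^2*ly^2*lz^2 := by positivity
    linarith
  · exact nobad2 (n₀ := n₀) hm hn₁ hcop' x₁ u y z hlu hly hlz hml huyz hyz

private lemma good (m n₀ n₁ : ℤ) (hm : 4 ≤ m) (hn₀ : 0 < n₀) (hn₁ : 0 < n₁)
    (hcop : Int.gcd n₀ n₁ = 1) (hcop' : Int.gcd n₁ m = 1)
    (x y z x₁ y₁ : ℤ[X])
    (hxpos : ∀ t : ℕ, 0 < x.eval (t:ℤ)) (hypos : ∀ t : ℕ, 0 < y.eval (t:ℤ))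
    (hzpos : ∀ t : ℕ, 0 < z.eval (t:ℤ))
    (heq : C m * (x*y*z) = (C n₀ + C n₁ * X) * (x*y + x*z + y*z))
    (hx : x = (C n₀ + C n₁ * X) * x₁) (hy : y = (C n₀ + C n₁ * X) * y₁) :
    ∃ l k' s r : ℤ, 0 < l ∧ 0 < k' ∧ 0 < s ∧ 0 < r ∧
      n₁ = l * (m * k' - 1) ∧ s * n₁ = k' * l + r * n₀ ∧ r ∣ s * k' * l ∧
      ({x, y, z} : Multiset (Polynomial ℤ)) =
        {C k' * (C n₀ + C n₁ * X), C (k' * l * s / r) + C (k' * l) * X,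
         (C n₀ + C n₁ * X) * (C s + C r * X)} := by
  have hnne : (C n₀ + C n₁ * X : ℤ[X]) ≠ 0 := fun h => by
    have := n_posEval hn₀ hn₁ 0; rw [h] at this; simp at this
  have hx₁pos : ∀ t : ℕ, 0 < x₁.eval (t:ℤ) := fun t => by
    have h1 := hxpos t
    rw [hx, eval_mul] at h1
    exact pos_fac h1 (n_posEval hn₀ hn₁ t)
  have hy₁pos : ∀ t : ℕ, 0 < y₁.eval (t:ℤ) := fun t => by
    have h1 := hypos t
    rw [hy, eval_mul] at h1
    exact pos_fac h1 (n_posEval hn₀ hn₁ t)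
  have hx₁ne : x₁ ≠ 0 := fun h => by have := hx₁pos 0; rw [h] at this; simp at this
  have hy₁ne : y₁ ≠ 0 := fun h => by have := hy₁pos 0; rw [h] at this; simp at this
  have hzne : z ≠ 0 := fun h => by have := hzpos 0; rw [h] at this; simp at this
  have hzdeg1 : 1 ≤ z.natDegree := z_nonconst hm hn₀ hn₁ hxpos hypos hzpos heq
  have hlx₁ : 0 < x₁.leadingCoeff := leadingCoeff_pos_of_posEval hx₁pos
  have hly₁ : 0 < y₁.leadingCoeff := leadingCoeff_pos_of_posEval hy₁pos
  have hlz : 0 < z.leadingCoeff := leadingCoeff_pos_of_posEval hzpos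
  have hclaim : x₁.natDegree = 0 ∨ y₁.natDegree = 0 := by
    by_contra hc
    push_neg at hc
    obtain ⟨ha', hb'⟩ := hc
    have ha1 : 1 ≤ x₁.natDegree := by omega
    have hb1 : 1 ≤ y₁.natDegree := by omega
    have heq' := heq
    rw [hx, hy] at heq'
    have hE : C m * (x₁ * y₁ * z)
        = (C n₀ + C n₁ * X) * (x₁ * y₁) + x₁ * z + y₁ * z :=
      mul_left_cancel₀ (mul_ne_zero hnne hnne) (by linear_combination heq')
    -- leading coefficients of the three summands
    have hT1lead : 0 < ((C n₀ + C n₁ * X) * (x₁ * y₁)).leadingCoeff := by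
      rw [leadingCoeff_mul, leadingCoeff_mul, n_lead hn₁]
      positivity
    have hT2lead : 0 < (x₁ * z).leadingCoeff := by
      rw [leadingCoeff_mul]; positivity
    have hT3lead : 0 < (y₁ * z).leadingCoeff := by
      rw [leadingCoeff_mul]; positivity
    have h12 := lead_add_pos hT1lead hT2lead
    have h123 := lead_add_pos h12.1 hT3lead
    have hT1deg : ((C n₀ + C n₁ * X) * (x₁ * y₁)).natDegree
        = 1 + (x₁.natDegree + y₁.natDegree) := by
      rw [natDegree_mul hnne (mul_ne_zero hx₁ne hy₁ne), natDegree_mul hx₁ne hy₁ne,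
        n_natDegree hn₁]
    have hT2deg : (x₁ * z).natDegree = x₁.natDegree + z.natDegree :=
      natDegree_mul hx₁ne hzne
    have hT3deg : (y₁ * z).natDegree = y₁.natDegree + z.natDegree :=
      natDegree_mul hy₁ne hzne
    have hCmne : (C m : ℤ[X]) ≠ 0 := fun h => by
      have := C_eq_zero.mp h; omega
    have hLdeg : (C m * (x₁ * y₁ * z)).natDegree
        = x₁.natDegree + y₁.natDegree + z.natDegree := by
      rw [natDegree_mul hCmne (mul_ne_zero (mul_ne_zero hx₁ne hy₁ne) hzne), natDegree_mul (mul_ne_zero hx₁ne hy₁ne) hzne,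
        natDegree_mul hx₁ne hy₁ne, natDegree_C]
      omega
    have hdeg := congrArg natDegree hE
    rw [hLdeg, h123.2, h12.2, hT1deg, hT2deg, hT3deg] at hdeg
    have hdz : z.natDegree = 1 := by omega
    -- compare top coefficients at degree D
    have hco := congrArg (fun p => Polynomial.coeff p
      (x₁.natDegree + y₁.natDegree + 1)) hE
    have hD : (C m * (x₁ * y₁ * z)).natDegree = x₁.natDegree + y₁.natDegree + 1 := by omega
    have hL : (C m * (x₁ * y₁ * z)).coeff (x₁.natDegree + y₁.natDegree + 1)
        = m * (x₁.leadingCoeff * y₁.leadingCoeff * z.leadingCoeff) := by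
      rw [show (C m * (x₁ * y₁ * z)).coeff (x₁.natDegree + y₁.natDegree + 1)
            = (C m * (x₁ * y₁ * z)).leadingCoeff by rw [leadingCoeff, hD],
        leadingCoeff_mul, leadingCoeff_mul, leadingCoeff_mul, leadingCoeff_C]
    have hR1 : ((C n₀ + C n₁ * X) * (x₁ * y₁)).coeff (x₁.natDegree + y₁.natDegree + 1)
        = n₁ * (x₁.leadingCoeff * y₁.leadingCoeff) := by
      have e1 : ((C n₀ + C n₁ * X) * (x₁ * y₁)).coeff (x₁.natDegree + y₁.natDegree + 1)
          = ((C n₀ + C n₁ * X) * (x₁ * y₁)).leadingCoeff := by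
        rw [leadingCoeff, hT1deg]
        congr 1
        omega
      rw [e1, leadingCoeff_mul, leadingCoeff_mul, n_lead hn₁]
    have hR2 : (x₁ * z).coeff (x₁.natDegree + y₁.natDegree + 1) = 0 :=
      coeff_eq_zero_of_natDegree_lt (by omega)
    have hR3 : (y₁ * z).coeff (x₁.natDegree + y₁.natDegree + 1) = 0 :=
      coeff_eq_zero_of_natDegree_lt (by omega)
    simp only [coeff_add, hR2, hR3] at hco
    rw [hL, hR1] at hco
    have hfin : m * z.leadingCoeff = n₁ :=
      mul_right_cancel₀ (by positivity : x₁.leadingCoeff * y₁.leadingCoeff ≠ 0)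
        (by linear_combination hco)
    exact m_dvd_absurd hm hcop' ⟨z.leadingCoeff, hfin.symm⟩
  rcases hclaim with h | h
  · exact good' m n₀ n₁ hm hn₀ hn₁ hcop hcop' x y z y₁ (x₁.coeff 0) hxpos hypos hzpos heq
      (by rw [hx]; congr 1; exact x₁.eq_C_of_natDegree_eq_zero h) hy
  · obtain ⟨l, k', s, r, h1, h2, h3, h4, h5, h6, h7, h8⟩ :=
      good' m n₀ n₁ hm hn₀ hn₁ hcop hcop' y x z x₁ (y₁.coeff 0) hypos hxpos hzpos
        (by linear_combination heq)
        (by rw [hy]; congr 1; exact y₁.eq_C_of_natDegree_eq_zero h) hx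
    exact ⟨l, k', s, r, h1, h2, h3, h4, h5, h6, h7, (mswap12 x y z).trans h8⟩

private lemma mrot {α : Type*} (a b c : α) : ({a, b, c} : Multiset α) = {c, a, b} :=
  (mswap23 a b c).trans (mswap12 a c b)

set_option maxHeartbeats 1600000 in
private lemma assemble (m n₀ n₁ : ℤ) (hm : 4 ≤ m) (hn₀ : 0 < n₀) (hn₁ : 0 < n₁)
    (hcop : Int.gcd n₀ n₁ = 1) (hcop' : Int.gcd n₁ m = 1)
    (x y z : Polynomial ℤ)
    (hxpos : ∀ t : ℕ, 0 < x.eval (t:ℤ)) (hypos : ∀ t : ℕ, 0 < y.eval (t:ℤ))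
    (hzpos : ∀ t : ℕ, 0 < z.eval (t:ℤ))
    (heq : C m * (x*y*z) = (C n₀ + C n₁ * X) * (x*y + x*z + y*z))
    (hdx : (C n₀ + C n₁ * X : Polynomial ℤ) ∣ x) :
    ∃ l k s r : ℤ, 0 < l ∧ 0 < k ∧ 0 < s ∧ 0 < r ∧
      n₁ = l * (m * k - 1) ∧ s * n₁ = k * l + r * n₀ ∧ r ∣ s * k * l ∧
      ({x, y, z} : Multiset (Polynomial ℤ)) =
        {C k * (C n₀ + C n₁ * X), C (k * l * s / r) + C (k * l) * X,
         (C n₀ + C n₁ * X) * (C s + C r * X)} := by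
  have hp : Prime (C n₀ + C n₁ * X : Polynomial ℤ) := nprime hn₁ hcop
  have hnne : (C n₀ + C n₁ * X : Polynomial ℤ) ≠ 0 := n_ne_zero hn₀ hn₁
  obtain ⟨x₁, hx⟩ := hdx
  have heq0 := heq
  rw [hx] at heq
  have hE : C m * (x₁*(y*z)) = (C n₀ + C n₁ * X)*(x₁*(y+z)) + y*z :=
    mul_left_cancel₀ hnne (by linear_combination heq)
  have hsplit : (C n₀ + C n₁ * X : Polynomial ℤ) ∣ y * (z * (C m * x₁ - 1)) :=
    ⟨x₁*(y+z), by linear_combination hE⟩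
  rcases hp.2.2 _ _ hsplit with hy | hrest
  · obtain ⟨y₁, hy⟩ := hy
    exact good m n₀ n₁ hm hn₀ hn₁ hcop hcop' x y z x₁ y₁ hxpos hypos hzpos heq0 hx hy
  · rcases hp.2.2 _ _ hrest with hz | hbad
    · obtain ⟨z₁, hz⟩ := hz
      obtain ⟨l, k', s, r, h1, h2, h3, h4, h5, h6, h7, h8⟩ :=
        good m n₀ n₁ hm hn₀ hn₁ hcop hcop' x z y x₁ z₁ hxpos hzpos hypos
          (by linear_combination heq0) hx hz
      exact ⟨l, k', s, r, h1, h2, h3, h4, h5, h6, h7, (mswap23 x y z).trans h8⟩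
    · exact absurd (nobad m n₀ n₁ hm hn₀ hn₁ hcop hcop' x y z x₁
        hxpos hypos hzpos heq0 hx hbad) (fun h => h)

/-- Necessity part of the main Theorem: any integer polynomial solution forces the
existence of parameters `l, k, s, r` satisfying conditions i)–iii), and up to a
permutation of `x, y, z` the solution has the stated form. -/
theorem necessity (m n₀ n₁ : ℤ) (hm : 4 ≤ m) (hn₀ : 0 < n₀) (hn₁ : 0 < n₁)
    (hcop : Int.gcd n₀ n₁ = 1) (hcop' : Int.gcd n₁ m = 1)
    (x y z : Polynomial ℤ) (hsol : IsIntPolySolution m n₀ n₁ x y z) :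
    ∃ l k s r : ℤ, 0 < l ∧ 0 < k ∧ 0 < s ∧ 0 < r ∧
      n₁ = l * (m * k - 1) ∧
      s * n₁ = k * l + r * n₀ ∧
      r ∣ s * k * l ∧
      ({x, y, z} : Multiset (Polynomial ℤ)) =
        {C k * (C n₀ + C n₁ * X),
         C (k * l * s / r) + C (k * l) * X,
         (C n₀ + C n₁ * X) * (C s + C r * X)} := by
  obtain ⟨hxpos, hypos, hzpos, heq⟩ := hsol
  have hp : Prime (C n₀ + C n₁ * X : Polynomial ℤ) := nprime hn₁ hcop
  have hnne : (C n₀ + C n₁ * X : Polynomial ℤ) ≠ 0 := n_ne_zero hn₀ hn₁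
  have hndvd : (C n₀ + C n₁ * X : Polynomial ℤ) ∣ C m * (x*y*z) := ⟨_, heq⟩
  have hnotCm : ¬ (C n₀ + C n₁ * X : Polynomial ℤ) ∣ (C m : Polynomial ℤ) := by
    intro hd
    have hCmne : (C m : Polynomial ℤ) ≠ 0 := fun h => by
      have := C_eq_zero.mp h; omega
    have := Polynomial.natDegree_le_of_dvd hd hCmne
    rw [n_natDegree hn₁, natDegree_C] at this
    omega
  have hxyz : (C n₀ + C n₁ * X : Polynomial ℤ) ∣ x*(y*z) := by
    have h := (hp.2.2 _ _ hndvd).resolve_left hnotCm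
    rwa [mul_assoc] at h
  rcases hp.2.2 _ _ hxyz with hdx | hrest
  · exact assemble m n₀ n₁ hm hn₀ hn₁ hcop hcop' x y z hxpos hypos hzpos heq hdx
  · rcases hp.2.2 _ _ hrest with hdy | hdz
    · obtain ⟨l, k, s, r, h1, h2, h3, h4, h5, h6, h7, h8⟩ :=
        assemble m n₀ n₁ hm hn₀ hn₁ hcop hcop' y x z hypos hxpos hzpos
          (by linear_combination heq) hdy
      exact ⟨l, k, s, r, h1, h2, h3, h4, h5, h6, h7, (mswap12 x y z).trans h8⟩
    · obtain ⟨l, k, s, r, h1, h2, h3, h4, h5, h6, h7, h8⟩ :=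
        assemble m n₀ n₁ hm hn₀ hn₁ hcop hcop' z x y hzpos hxpos hypos
          (by linear_combination heq) hdz
      exact ⟨l, k, s, r, h1, h2, h3, h4, h5, h6, h7, (mrot x y z).trans h8⟩
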